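/- Non-existence via iteration (part ii of Lemma 2.6): Let α, β, r_0 > 0, m > 1, ε ∈ (0,1), and suppose ψ ∈ C^1([r_0,∞)) is nondecreasing and satisfies αψ(r) − βψ(r+1−ε) + (ψ'(r))^m ≥ f(r) for all r > r_0, where f is nondecreasing with f(r) → ∞. Given a > m, there exists ε_0(a,m) ∈ (0,1) such that if ε < ε_0, no such ψ can satisfy ψ(r) ≥ c·exp(a^{r−1}) for all large r (for any c > 0). -/

import Mathlib

open Filter

/-- If `1 ≤ x`, `0 ≤ y`, `0 ≤ B` and `2B ≤ x + y^m` with `m ≥ 1`, then `B^(1/m) ≤ x + y`. -/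
lemma stmt7_auxA {m x y B : ℝ} (hm : 1 ≤ m) (hx : 1 ≤ x) (hy : 0 ≤ y) (hB : 0 ≤ B)
    (h : 2 * B ≤ x + y ^ m) : B ^ (1/m) ≤ x + y := by
  have hm0 : (0:ℝ) < m := lt_of_lt_of_le one_pos hm
  set M := max x y with hM
  have hxM : x ≤ M := le_max_left _ _
  have hyM : y ≤ M := le_max_right _ _
  have hM1 : (1:ℝ) ≤ M := le_trans hx hxM
  have hM0 : (0:ℝ) ≤ M := le_trans zero_le_one hM1
  have hxm : x ≤ M ^ m := by
    calc x ≤ M := hxM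
    _ = M ^ (1:ℝ) := (Real.rpow_one M).symm
    _ ≤ M ^ m := Real.rpow_le_rpow_of_exponent_le hM1 hm
  have hym : y ^ m ≤ M ^ m := Real.rpow_le_rpow hy hyM hm0.le
  have hBM : B ≤ M ^ m := by nlinarith
  have : B ^ (1/m) ≤ (M ^ m) ^ (1/m) := Real.rpow_le_rpow hB hBM (by positivity)
  have hMm : (M ^ m) ^ (1/m) = M := by
    rw [← Real.rpow_mul hM0, mul_one_div, div_self hm0.ne', Real.rpow_one]
  calc B ^ (1/m) ≤ (M ^ m) ^ (1/m) := this
  _ = M := hMm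
  _ ≤ x + y := by rcases max_cases x y with ⟨h1, _⟩ | ⟨h1, _⟩ <;> rw [hM, h1] <;> linarith

/-- A monotone function with a derivative has nonnegative derivative (right limit of slopes). -/
lemma stmt7_auxB {ψ : ℝ → ℝ} {r0 s : ℝ} (hder : HasDerivAt ψ (deriv ψ s) s)
    (hmono : MonotoneOn ψ (Set.Ici r0)) (hs : r0 ≤ s) : 0 ≤ deriv ψ s := by
  have h := (hder.hasDerivWithinAt (s := Set.Ioi s))
  rw [hasDerivWithinAt_iff_tendsto_slope] at h
  have hset : Set.Ioi s \ {s} = Set.Ioi s := by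
    apply Set.diff_singleton_eq_self; simp
  rw [hset] at h
  refine ge_of_tendsto h ?_
  filter_upwards [self_mem_nhdsWithin] with y hy
  have hy' : s < y := hy
  rw [slope_def_field]
  have h1 : ψ s ≤ ψ y := hmono (Set.mem_Ici.2 hs) (Set.mem_Ici.2 (le_trans hs hy'.le)) hy'.le
  have h2 : (0:ℝ) ≤ y - s := by linarith
  exact div_nonneg (by linarith) h2

set_option maxHeartbeats 1600000 in
/-- Non-existence via iteration: if `ψ` is a nondecreasing `C¹` solution of
`αψ(r) − βψ(r+1−ε) + (ψ'(r))^m ≥ f(r)` for `r > r₀`, with `f` nondecreasing and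
tending to `∞`, and `a > m`, then for `ε` small enough (depending on `a, m`)
`ψ` cannot satisfy `ψ(r) ≥ c·exp(a^{r−1})` for all large `r`. -/
theorem stmt7 (α β r0 m a : ℝ) (hα : 0 < α) (hβ : 0 < β) (hr0 : 0 < r0)
    (hm : 1 < m) (ha : m < a)
    (f : ℝ → ℝ) (hf : Monotone f) (hftop : Tendsto f atTop atTop) :
    ∃ ε0 ∈ Set.Ioo (0 : ℝ) 1, ∀ ε ∈ Set.Ioo (0 : ℝ) ε0,
      ∀ ψ : ℝ → ℝ,
        (∀ r ∈ Set.Ici r0, HasDerivAt ψ (deriv ψ r) r) →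
        ContinuousOn (deriv ψ) (Set.Ici r0) →
        MonotoneOn ψ (Set.Ici r0) →
        (∀ r, r0 < r → f r ≤ α * ψ r - β * ψ (r + 1 - ε) + (deriv ψ r) ^ m) →
        ∀ c : ℝ, 0 < c →
          ¬ (∀ᶠ r in atTop, c * Real.exp (a ^ (r - 1)) ≤ ψ r) := by
  have ha1 : (1:ℝ) < a := lt_trans hm ha
  have ha0 : (0:ℝ) < a := lt_trans one_pos ha1
  have hm0 : (0:ℝ) < m := lt_trans one_pos hm
  have hloga : (0:ℝ) < Real.log a := Real.log_pos ha1
  set lm := Real.logb a m with hlm_def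
  have hlm0 : 0 < lm := Real.logb_pos ha1 hm
  have hlm1 : lm < 1 := by
    rw [hlm_def, Real.logb, div_lt_one hloga]
    exact Real.log_lt_log hm0 ha
  set δ : ℝ := (lm + 1) / 2 with hδ_def
  have hδ0 : 0 < δ := by positivity
  have hδ1 : δ < 1 := by rw [hδ_def]; linarith
  have hlmδ : lm < δ := by rw [hδ_def]; linarith
  have hγa : m < a ^ δ := by
    have : a ^ lm < a ^ δ := Real.rpow_lt_rpow_of_exponent_lt ha1 hlmδ
    rwa [hlm_def, Real.rpow_logb ha0 ha1.ne' hm0] at this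
  set γ : ℝ := a ^ δ / m with hγ_def
  have hγ1 : 1 < γ := by rw [hγ_def, lt_div_iff₀ hm0]; linarith
  refine ⟨1 - δ, ⟨by linarith, by linarith⟩, ?_⟩
  rintro ε ⟨hε0, hε1⟩ ψ hder hcont hmono hineq c hc heven
  set η : ℝ := 1 - ε - δ with hη_def
  have hη0 : 0 < η := by rw [hη_def]; linarith
  have hη1 : η < 1 := by rw [hη_def]; linarith
  -- thresholds
  obtain ⟨R1, hR1⟩ := eventually_atTop.1 heven
  obtain ⟨R2, hR2⟩ := eventually_atTop.1 (hftop.eventually_ge_atTop 0)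
  -- c * exp (a^(r-1)) → ∞
  have T1 : Tendsto (fun r : ℝ => a ^ (r - 1)) atTop atTop := by
    have h1 : Tendsto (fun r : ℝ => (r - 1) * Real.log a) atTop atTop :=
      (tendsto_atTop_add_const_right atTop (-1) tendsto_id).atTop_mul_const hloga
    have h2 := Real.tendsto_exp_atTop.comp h1
    refine h2.congr fun r => ?_
    simp only [Function.comp]
    rw [Real.rpow_def_of_pos ha0, mul_comm]
  have T2 : Tendsto (fun r : ℝ => c * Real.exp (a ^ (r - 1))) atTop atTop :=
    (Real.tendsto_exp_atTop.comp T1).const_mul_atTop hc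
  obtain ⟨R3, hR3⟩ := eventually_atTop.1 (T2.eventually_ge_atTop (1/α))
  set R : ℝ := max (max R1 R2) (max R3 (r0 + 2)) + 1 with hR_def
  -- basic facts for s ≥ R - 1
  have hsR1 : ∀ s, R - 1 ≤ s → R1 ≤ s := fun s hs => by
    have : R1 ≤ R - 1 := by
      rw [hR_def]; have := le_max_left R1 R2; have := le_max_left (max R1 R2) (max R3 (r0+2))
      simp only [add_sub_cancel_right]; exact le_trans (le_max_left R1 R2) (le_max_left _ _)
    linarith
  have hsR2 : ∀ s, R - 1 ≤ s → R2 ≤ s := fun s hs => by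
    have : R2 ≤ R - 1 := by
      rw [hR_def]; simp only [add_sub_cancel_right]
      exact le_trans (le_max_right R1 R2) (le_max_left _ _)
    linarith
  have hsR3 : ∀ s, R - 1 ≤ s → R3 ≤ s := fun s hs => by
    have : R3 ≤ R - 1 := by
      rw [hR_def]; simp only [add_sub_cancel_right]
      exact le_trans (le_max_left R3 (r0+2)) (le_max_right _ _)
    linarith
  have hsr0 : ∀ s, R - 1 ≤ s → r0 < s := fun s hs => by
    have : r0 + 2 ≤ R - 1 := by
      rw [hR_def]; simp only [add_sub_cancel_right]
      exact le_trans (le_max_right R3 (r0+2)) (le_max_right _ _)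
    linarith
  have hψlb : ∀ s, R - 1 ≤ s → c * Real.exp (a ^ (s - 1)) ≤ ψ s := fun s hs =>
    hR1 s (hsR1 s hs)
  have hψpos : ∀ s, R - 1 ≤ s → 0 < ψ s := fun s hs =>
    lt_of_lt_of_le (by positivity) (hψlb s hs)
  have hψ1 : ∀ s, R - 1 ≤ s → 1 ≤ α * ψ s := fun s hs => by
    have h1 : 1/α ≤ c * Real.exp (a ^ (s - 1)) := hR3 s (hsR3 s hs)
    have h2 := hψlb s hs
    rw [div_le_iff₀ hα] at h1
    calc (1:ℝ) ≤ c * Real.exp (a ^ (s-1)) * α := h1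
    _ ≤ ψ s * α := by nlinarith [Real.exp_pos (a ^ (s-1))]
    _ = α * ψ s := mul_comm _ _
  -- key pointwise differential inequality
  have hderiv0 : ∀ s, R - 1 ≤ s → 0 ≤ deriv ψ s := fun s hs =>
    stmt7_auxB (hder s (Set.mem_Ici.2 (hsr0 s hs).le)) hmono (hsr0 s hs).le
  have hkey : ∀ s, R - 1 ≤ s →
      ((β/2) * ψ (s + 1 - ε)) ^ (1/m) ≤ α * ψ s + deriv ψ s := by
    intro s hs
    have hs1ε : R - 1 ≤ s + 1 - ε := by linarith
    have hB0 : 0 ≤ (β/2) * ψ (s + 1 - ε) := by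
      have := hψpos _ hs1ε; positivity
    refine stmt7_auxA hm.le (hψ1 s hs) (hderiv0 s hs) hB0 ?_
    have h1 := hineq s (hsr0 s hs)
    have h2 := hR2 s (hsR2 s hs)
    linarith
  -- constants of iteration
  set D : ℝ := η * Real.exp (-(α * η)) * (β/2) ^ (1/m) with hD_def
  have hD0 : 0 < D := by
    have : (0:ℝ) < (β/2) ^ (1/m) := Real.rpow_pos_of_pos (by linarith) _
    positivity
  set Ms : ℝ := min c (D ^ (m/(m-1))) with hMs_def
  have hMs0 : 0 < Ms := lt_min hc (Real.rpow_pos_of_pos hD0 _)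
  have hMsc : Ms ≤ c := min_le_left _ _
  have hDM : Ms ≤ D * Ms ^ (1/m) := by
    have hm1 : (0:ℝ) < m - 1 := by linarith
    have h1 : Ms ≤ D ^ (m/(m-1)) := min_le_right _ _
    have h2 : Ms ^ ((m-1)/m) ≤ (D ^ (m/(m-1))) ^ ((m-1)/m) :=
      Real.rpow_le_rpow hMs0.le h1 (by positivity)
    have h3 : (D ^ (m/(m-1))) ^ ((m-1)/m) = D := by
      rw [← Real.rpow_mul hD0.le]
      rw [div_mul_div_comm, mul_comm m (m-1), div_self (by positivity), Real.rpow_one]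
    rw [h3] at h2
    calc Ms = Ms ^ (1/m) * Ms ^ ((m-1)/m) := by
          rw [← Real.rpow_add hMs0]
          rw [← add_div]
          rw [show 1 + (m-1) = m by ring, div_self hm0.ne', Real.rpow_one]
    _ ≤ Ms ^ (1/m) * D := by
          exact mul_le_mul_of_nonneg_left h2 (Real.rpow_nonneg hMs0.le _)
    _ = D * Ms ^ (1/m) := mul_comm _ _
  -- continuity of ψ on Ici r0
  have hψcont : ContinuousOn ψ (Set.Ici r0) := fun s hs =>
    (hder s hs).continuousAt.continuousWithinAt
  -- main induction
  have main : ∀ n : ℕ, ∀ r, R ≤ r → Ms * Real.exp ((γ ^ n / a) * a ^ r) ≤ ψ r := by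
    intro n
    induction n with
    | zero =>
      intro r hr
      have h1 : (γ ^ 0 / a) * a ^ r = a ^ (r - 1) := by
        rw [pow_zero, Real.rpow_sub ha0, Real.rpow_one]; ring
      rw [h1]
      calc Ms * Real.exp (a ^ (r-1)) ≤ c * Real.exp (a ^ (r-1)) := by
            exact mul_le_mul_of_nonneg_right hMsc (Real.exp_pos _).le
      _ ≤ ψ r := hψlb r (by linarith)
    | succ n ih =>
      intro r hr
      set Kn : ℝ := γ ^ n / a with hKn_def
      set u : ℝ := r - η with hu_def
      have hur : u ≤ r := by rw [hu_def]; linarith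
      have huR : R - 1 ≤ u := by rw [hu_def]; linarith
      have hur0 : r0 < u := hsr0 u huR
      have hIcc_sub : Set.Icc u r ⊆ Set.Ici r0 := fun s hs =>
        Set.mem_Ici.2 (le_trans hur0.le hs.1)
      -- FTC for g = exp(α s) ψ(s)
      set g' : ℝ → ℝ := fun s => Real.exp (α * s) * (α * ψ s + deriv ψ s) with hg'_def
      have hg : ∀ s ∈ Set.uIcc u r, HasDerivAt (fun t => Real.exp (α * t) * ψ t) (g' s) s := by
        intro s hs
        rw [Set.uIcc_of_le hur] at hs
        have h1 : HasDerivAt (fun t : ℝ => Real.exp (α * t)) (Real.exp (α * s) * (α * 1)) s :=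
          ((hasDerivAt_id s).const_mul α).exp
        have h2 := h1.mul (hder s (hIcc_sub hs))
        have h3 : g' s = Real.exp (α * s) * (α * 1) * ψ s + Real.exp (α * s) * deriv ψ s := by
          rw [hg'_def]; ring
        rw [h3]; exact h2
      have hg'cont : ContinuousOn g' (Set.Icc u r) := by
        apply ContinuousOn.mul
        · exact (Real.continuous_exp.comp (continuous_const.mul continuous_id)).continuousOn
        · exact (continuousOn_const.mul (hψcont.mono hIcc_sub)).add (hcont.mono hIcc_sub)
      have hint : IntervalIntegrable g' MeasureTheory.volume u r := by
        apply ContinuousOn.intervalIntegrable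
        rwa [Set.uIcc_of_le hur]
      have hftc := intervalIntegral.integral_eq_sub_of_hasDerivAt hg hint
      -- pointwise lower bound on g'
      set L : ℝ := Real.exp (α * u) * ((β/2) * (Ms * Real.exp (Kn * a ^ (r + δ)))) ^ (1/m)
        with hL_def
      have hpt : ∀ s ∈ Set.Icc u r, L ≤ g' s := by
        intro s hs
        have hsR : R - 1 ≤ s := le_trans huR hs.1
        have h1 : Real.exp (α * u) ≤ Real.exp (α * s) :=
          Real.exp_le_exp.2 (by nlinarith [hs.1])
        have hs1ε : r + δ ≤ s + 1 - ε := by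
          have := hs.1; rw [hu_def] at this; rw [hη_def] at this; linarith
        have hs1εR : R ≤ s + 1 - ε := by linarith
        have h2 : Ms * Real.exp (Kn * a ^ (r + δ)) ≤ ψ (s + 1 - ε) := by
          calc Ms * Real.exp (Kn * a ^ (r + δ)) ≤ Ms * Real.exp (Kn * a ^ (s + 1 - ε)) := by
                apply mul_le_mul_of_nonneg_left _ hMs0.le
                apply Real.exp_le_exp.2
                apply mul_le_mul_of_nonneg_left _ (by positivity)
                exact Real.rpow_le_rpow_of_exponent_le ha1.le hs1ε
          _ ≤ ψ (s + 1 - ε) := ih _ hs1εR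
        have h3 : ((β/2) * (Ms * Real.exp (Kn * a ^ (r + δ)))) ^ (1/m)
            ≤ ((β/2) * ψ (s + 1 - ε)) ^ (1/m) := by
          apply Real.rpow_le_rpow (by positivity) _ (by positivity)
          exact mul_le_mul_of_nonneg_left h2 (by linarith)
        have h4 := le_trans h3 (hkey s hsR)
        rw [hL_def, hg'_def]
        have h5 : (0:ℝ) ≤ ((β/2) * (Ms * Real.exp (Kn * a ^ (r + δ)))) ^ (1/m) := by
          positivity
        calc Real.exp (α * u) * ((β/2) * (Ms * Real.exp (Kn * a ^ (r + δ)))) ^ (1/m)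
            ≤ Real.exp (α * s) * ((β/2) * (Ms * Real.exp (Kn * a ^ (r + δ)))) ^ (1/m) :=
              mul_le_mul_of_nonneg_right h1 h5
        _ ≤ Real.exp (α * s) * (α * ψ s + deriv ψ s) := by
              exact mul_le_mul_of_nonneg_left h4 (Real.exp_pos _).le
      -- integral lower bound
      have hIntL : η * L ≤ ∫ s in u..r, g' s := by
        have h1 : ∫ s in u..r, L = η * L := by
          rw [intervalIntegral.integral_const, smul_eq_mul, hu_def]; ring_nf
        calc η * L = ∫ s in u..r, L := h1.symm
        _ ≤ ∫ s in u..r, g' s := by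
            apply intervalIntegral.integral_mono_on hur intervalIntegrable_const hint hpt
      have hgu : 0 ≤ Real.exp (α * u) * ψ u := by
        have := hψpos u huR; positivity
      have hgr : η * L ≤ Real.exp (α * r) * ψ r := by
        rw [hftc] at hIntL; linarith
      -- unravel L
      have hexp_rpow : ∀ X : ℝ, (Real.exp X) ^ (1/m) = Real.exp (X * (1/m)) := fun X => by
        rw [Real.rpow_def_of_pos (Real.exp_pos X), Real.log_exp]
      have hLval : η * L = Real.exp (α * u) * (D / Real.exp (-(α * η)) / η * η) *
          (Ms ^ (1/m) * Real.exp (Kn * a ^ (r + δ) * (1/m))) := by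
        rw [hL_def, hD_def]
        rw [Real.mul_rpow (by linarith) (by positivity),
            Real.mul_rpow hMs0.le (Real.exp_pos _).le, hexp_rpow]
        field_simp
      have hexpK : Kn * a ^ (r + δ) * (1/m) = (γ ^ (n+1) / a) * a ^ r := by
        rw [hKn_def, Real.rpow_add ha0, hγ_def]
        rw [pow_succ]
        field_simp
      have hψr : D * Ms ^ (1/m) * Real.exp ((γ ^ (n+1) / a) * a ^ r) ≤ ψ r := by
        have h6 : Real.exp (α * u) * (D / Real.exp (-(α * η)) / η * η) =
            Real.exp (α * r) * D := by
          rw [hu_def]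
          rw [show α * (r - η) = α * r + (-(α * η)) by ring, Real.exp_add]
          field_simp
        have h7 : η * L = Real.exp (α * r) * (D * (Ms ^ (1/m) *
            Real.exp ((γ ^ (n+1) / a) * a ^ r))) := by
          rw [hLval, hexpK, h6]; ring
        rw [h7] at hgr
        have h8 := (mul_le_mul_iff_right₀ (Real.exp_pos (α * r))).1 hgr
        linarith [h8]
      calc Ms * Real.exp ((γ ^ (n+1) / a) * a ^ r)
          ≤ D * Ms ^ (1/m) * Real.exp ((γ ^ (n+1) / a) * a ^ r) :=
            mul_le_mul_of_nonneg_right hDM (Real.exp_pos _).le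
      _ ≤ ψ r := hψr
  -- final contradiction
  have Tfin : Tendsto (fun n : ℕ => Ms * Real.exp ((γ ^ n / a) * a ^ R)) atTop atTop := by
    have h1 : Tendsto (fun n : ℕ => γ ^ n) atTop atTop := tendsto_pow_atTop_atTop_of_one_lt hγ1
    have h2 : Tendsto (fun n : ℕ => (γ ^ n / a) * a ^ R) atTop atTop := by
      have h3 := h1.atTop_mul_const (show (0:ℝ) < a ^ R / a by positivity)
      refine h3.congr fun n => ?_
      ring
    exact (Real.tendsto_exp_atTop.comp h2).const_mul_atTop hMs0
  obtain ⟨n, hn⟩ := (Tfin.eventually_gt_atTop (ψ R)).exists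
  exact absurd (main n R le_rfl) (not_le.2 hn)
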